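/- Let 1 < p < ∞ and let M_1, …, M_m : ℝ^n → ℝ^n (with m > 1) be paracontractions with respect to the p-norm ‖·‖_p sharing at least one common fixed point, and let M be the stacked map M(x_1, …, x_m) = (M_1(x_1), …, M_m(x_m)). Let S(1), S(2), …, S(q) be q ≥ 1 stochastic m × m matrices such that every entry of the product S(q)S(q−1)⋯S(1) is strictly positive. Then the composed map (S(q) ⊗ I) ∘ M ∘ (S(q−1) ⊗ I) ∘ M ∘ ⋯ ∘ (S(1) ⊗ I) ∘ M : (ℝ^n)^m → (ℝ^n)^m (1) is a paracontraction with respect to the mixed vector norm ‖·‖_{p,∞}, and (2) its set of fixed points equals F(M) ∩ C, i.e., the set of stacked vectors (y, y, …, y) where y is a common fixed point of M_1, …, M_m. -/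

import Mathlib

open Filter Topology Finset
open scoped ENNReal

def IsNormOn {E : Type*} [AddCommGroup E] [Module ℝ E] (N : E → ℝ) : Prop :=
  (∀ x, N x = 0 ↔ x = 0) ∧
  (∀ (c : ℝ) (x : E), N (c • x) = |c| * N x) ∧
  (∀ x y : E, N (x + y) ≤ N x + N y)

def IsParacontraction {E : Type*} [AddCommGroup E] [Module ℝ E] [TopologicalSpace E]
    (N : E → ℝ) (P : E → E) : Prop :=
  Continuous P ∧ ∀ x y : E, P x ≠ x → P y = y → N (P x - y) < N (x - y)

def QuasiNonexpansive {E : Type*} [AddCommGroup E] (N : E → ℝ) (P : E → E) : Prop :=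
  ∀ x y : E, P y = y → N (P x - y) ≤ N (x - y)

noncomputable def pnorm {n : ℕ} (p : ℝ) (x : Fin n → ℝ) : ℝ :=
  (∑ i, |x i| ^ p) ^ (1 / p)

noncomputable def pnormE {n : ℕ} (p : ℝ≥0∞) (x : Fin n → ℝ) : ℝ :=
  if p = ⊤ then ⨆ i, |x i| else (∑ i, |x i| ^ p.toReal) ^ (1 / p.toReal)

noncomputable def mixed22 {m n : ℕ} (x : Fin m → Fin n → ℝ) : ℝ :=
  pnorm 2 (fun i => pnorm 2 (x i))

noncomputable def mixedPInf {m n : ℕ} (p : ℝ) (x : Fin m → Fin n → ℝ) : ℝ :=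
  ⨆ i, pnorm p (x i)

noncomputable def mixedEInf {m n : ℕ} (p : ℝ≥0∞) (x : Fin m → Fin n → ℝ) : ℝ :=
  ⨆ i, pnormE p (x i)

def IsStochastic {m : ℕ} (S : Matrix (Fin m) (Fin m) ℝ) : Prop :=
  (∀ i j, 0 ≤ S i j) ∧ ∀ i, ∑ j, S i j = 1

def IsDoublyStochastic {m : ℕ} (S : Matrix (Fin m) (Fin m) ℝ) : Prop :=
  IsStochastic S ∧ ∀ j, ∑ i, S i j = 1

def kron {m n : ℕ} (S : Matrix (Fin m) (Fin m) ℝ) (x : Fin m → Fin n → ℝ) :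
    Fin m → Fin n → ℝ :=
  fun i => ∑ j, S i j • x j

def stackMap {m n : ℕ} (M : Fin m → (Fin n → ℝ) → (Fin n → ℝ)) :
    (Fin m → Fin n → ℝ) → (Fin m → Fin n → ℝ) :=
  fun x i => M i (x i)

def consensusSet (m n : ℕ) : Set (Fin m → Fin n → ℝ) :=
  {x | ∀ i j : Fin m, x i = x j}

def StronglyConnected {V : Type*} (G : V → V → Prop) : Prop :=
  ∀ i j : V, Relation.ReflTransGen G i j

def graphComp {V : Type*} (Gq Gp : V → V → Prop) : V → V → Prop :=
  fun i j => ∃ k, Gp i k ∧ Gq k j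

def composeChain {m : ℕ} (G : ℕ → Fin m → Fin m → Prop) (a : ℕ) :
    ℕ → (Fin m → Fin m → Prop)
  | 0 => G a
  | k + 1 => graphComp (G (a + (k + 1))) (composeChain G a k)

def mapChain {α : Type*} (F : ℕ → α → α) : ℕ → α → α
  | 0 => id
  | k + 1 => F (k + 1) ∘ mapChain F k

noncomputable def Phi {m : ℕ} (S : ℕ → Matrix (Fin m) (Fin m) ℝ) (τ t : ℕ) :
    Matrix (Fin m) (Fin m) ℝ :=
  (List.range (t - τ)).foldl (fun A k => S (τ + k + 1) * A) 1

section pc14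
variable {n : ℕ} {p : ℝ}

noncomputable def pc14Sp (p : ℝ) {n : ℕ} (v : Fin n → ℝ) : ℝ := ∑ k, |v k| ^ p

lemma pc14Sp_nonneg (hp : 1 < p) (v : Fin n → ℝ) : 0 ≤ pc14Sp p v :=
  Finset.sum_nonneg fun k _ => Real.rpow_nonneg (abs_nonneg _) _

lemma pc14_pnorm_eq (v : Fin n → ℝ) : pnorm p v = (pc14Sp p v) ^ (1 / p) := rfl

lemma pc14_pnorm_nonneg (hp : 1 < p) (v : Fin n → ℝ) : 0 ≤ pnorm p v :=
  Real.rpow_nonneg (pc14Sp_nonneg hp v) _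

lemma pc14Sp_eq_pow (hp : 1 < p) (v : Fin n → ℝ) : pc14Sp p v = (pnorm p v) ^ p := by
  have hp0 : p ≠ 0 := by positivity
  rw [pc14_pnorm_eq, ← Real.rpow_mul (pc14Sp_nonneg hp v), one_div_mul_cancel hp0,
    Real.rpow_one]

lemma pc14_pnorm_le (hp : 1 < p) {v : Fin n → ℝ} {c : ℝ} (hc : 0 ≤ c)
    (h : pc14Sp p v ≤ c ^ p) : pnorm p v ≤ c := by
  have hp0 : p ≠ 0 := by positivity
  have := Real.rpow_le_rpow (pc14Sp_nonneg hp v) h (by positivity : (0:ℝ) ≤ 1 / p)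
  rwa [← Real.rpow_mul hc, mul_one_div_cancel hp0, Real.rpow_one] at this

lemma pc14_pnorm_lt (hp : 1 < p) {v : Fin n → ℝ} {c : ℝ} (hc : 0 ≤ c)
    (h : pc14Sp p v < c ^ p) : pnorm p v < c := by
  have hp0 : p ≠ 0 := by positivity
  have hcpos : 0 < c := by
    rcases hc.lt_or_eq with h' | h'
    · exact h'
    · exfalso; rw [← h', Real.zero_rpow hp0] at h
      exact absurd h (not_lt.2 (pc14Sp_nonneg hp v))
  have := Real.rpow_lt_rpow (pc14Sp_nonneg hp v) h (by positivity : (0:ℝ) < 1 / p)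
  rwa [← Real.rpow_mul hcpos.le, mul_one_div_cancel hp0, Real.rpow_one] at this

lemma pc14Sp_le_of_pnorm_le (hp : 1 < p) {v : Fin n → ℝ} {c : ℝ}
    (h : pnorm p v ≤ c) : pc14Sp p v ≤ c ^ p := by
  rw [pc14Sp_eq_pow hp]
  exact Real.rpow_le_rpow (pc14_pnorm_nonneg hp v) h (by positivity)

lemma pc14_strictConvexOn_abs_rpow (hp : 1 < p) :
    StrictConvexOn ℝ Set.univ (fun t : ℝ => |t| ^ p) := by
  have hp0 : (0:ℝ) < p := by positivity
  refine ⟨convex_univ, ?_⟩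
  intro x _ y _ hxy a b ha hb hab
  simp only [smul_eq_mul]
  have key1 : |a * x + b * y| ≤ a * |x| + b * |y| := by
    calc |a * x + b * y| ≤ |a * x| + |b * y| := abs_add_le _ _
      _ = a * |x| + b * |y| := by rw [abs_mul, abs_mul, abs_of_pos ha, abs_of_pos hb]
  by_cases habs : |x| = |y|
  · have hy0 : y ≠ 0 := by
      rintro rfl
      rw [abs_zero, abs_eq_zero] at habs
      exact hxy (by rw [habs])
    have hxe : x = -y := by
      rcases abs_eq_abs.1 habs with h | h
      · exact absurd h hxy
      · exact h
    have hlt : |a * x + b * y| < a * |x| + b * |y| := by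
      rw [hxe]
      have h1 : a * -y + b * y = (b - a) * y := by ring
      rw [h1, abs_mul, abs_neg]
      have : |b - a| < a + b := by
        rw [abs_sub_lt_iff]; constructor <;> linarith
      calc |b - a| * |y| < (a + b) * |y| :=
            mul_lt_mul_of_pos_right this (abs_pos.2 hy0)
        _ = a * |y| + b * |y| := by ring
    have h2 := Real.rpow_lt_rpow (abs_nonneg _) hlt hp0
    refine lt_of_lt_of_le h2 ?_
    have hconv := (convexOn_rpow hp.le).2 (Set.mem_Ici.2 (abs_nonneg x))
      (Set.mem_Ici.2 (abs_nonneg y)) ha.le hb.le hab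
    simpa [smul_eq_mul] using hconv
  · have hstep := (strictConvexOn_rpow hp).2 (Set.mem_Ici.2 (abs_nonneg x))
      (Set.mem_Ici.2 (abs_nonneg y)) habs ha hb hab
    simp only [smul_eq_mul] at hstep
    exact lt_of_le_of_lt (Real.rpow_le_rpow (abs_nonneg _) key1 hp0.le) hstep

lemma pc14_scalar_jensen (hp : 1 < p) {m : ℕ} (w a : Fin m → ℝ)
    (hw : ∀ j, 0 ≤ w j) (hsum : ∑ j, w j = 1) :
    |∑ j, w j * a j| ^ p ≤ ∑ j, w j * |a j| ^ p := by
  have h := (pc14_strictConvexOn_abs_rpow hp).convexOn.map_sum_le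
    (t := Finset.univ) (w := w) (p := a) (fun i _ => hw i) hsum (fun i _ => trivial)
  simpa [smul_eq_mul] using h

lemma pc14_scalar_jensen_strict (hp : 1 < p) {m : ℕ} (w a : Fin m → ℝ)
    (hw : ∀ j, 0 ≤ w j) (hsum : ∑ j, w j = 1) {j0 j1 : Fin m}
    (h0 : 0 < w j0) (h1 : 0 < w j1) (hne : a j0 ≠ a j1) :
    |∑ j, w j * a j| ^ p < ∑ j, w j * |a j| ^ p := by
  classical
  set t : Finset (Fin m) := Finset.univ.filter (fun j => 0 < w j) with ht
  have hzero : ∀ j ∈ Finset.univ \ t, w j = 0 := by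
    intro j hj
    simp only [ht, Finset.mem_sdiff, Finset.mem_filter, Finset.mem_univ, true_and,
      not_lt] at hj
    exact le_antisymm hj (hw j)
  have hsum_t : ∀ f : Fin m → ℝ, ∑ j ∈ t, w j * f j = ∑ j, w j * f j := by
    intro f
    refine Finset.sum_subset (Finset.subset_univ t) ?_
    intro j _ hj
    have : w j = 0 := by
      have : j ∈ Finset.univ \ t := Finset.mem_sdiff.2 ⟨Finset.mem_univ j, hj⟩
      exact hzero j this
    simp [this]
  have hsum_t' : ∑ j ∈ t, w j = 1 := by
    have := hsum_t (fun _ => 1)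
    simpa using this.trans (by simpa using hsum)
  have hmem0 : j0 ∈ t := by simp [ht, h0]
  have hmem1 : j1 ∈ t := by simp [ht, h1]
  have h := (pc14_strictConvexOn_abs_rpow hp).map_sum_lt
    (t := t) (w := w) (p := a)
    (fun i hi => by simpa [ht] using (Finset.mem_filter.1 hi).2) hsum_t'
    (fun i _ => trivial) ⟨j0, hmem0, j1, hmem1, hne⟩
  simp only [smul_eq_mul] at h
  rwa [hsum_t, hsum_t (fun j => |a j| ^ p)] at h

end pc14

section pc14vec
variable {n m : ℕ} {p : ℝ}

lemma pc14_combo_apply (w : Fin m → ℝ) (v : Fin m → Fin n → ℝ) (k : Fin n) :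
    (∑ j, w j • v j) k = ∑ j, w j * v j k := by
  simp [Finset.sum_apply]

lemma pc14_sub_combo (w : Fin m → ℝ) (hsum : ∑ j, w j = 1)
    (u : Fin m → Fin n → ℝ) (y : Fin n → ℝ) :
    (∑ j, w j • u j) - y = ∑ j, w j • (u j - y) := by
  have : ∑ j, w j • (u j - y) = (∑ j, w j • u j) - (∑ j, w j) • y := by
    rw [Finset.sum_smul]
    rw [← Finset.sum_sub_distrib]
    exact Finset.sum_congr rfl fun j _ => smul_sub _ _ _
  rw [this, hsum, one_smul]

lemma pc14Sp_combo_le (hp : 1 < p) (w : Fin m → ℝ) (v : Fin m → Fin n → ℝ)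
    (hw : ∀ j, 0 ≤ w j) (hsum : ∑ j, w j = 1) :
    pc14Sp p (∑ j, w j • v j) ≤ ∑ j, w j * pc14Sp p (v j) := by
  unfold pc14Sp
  calc ∑ k, |(∑ j, w j • v j) k| ^ p
      = ∑ k, |∑ j, w j * v j k| ^ p := by
        refine Finset.sum_congr rfl fun k _ => ?_
        rw [pc14_combo_apply]
    _ ≤ ∑ k, ∑ j, w j * |v j k| ^ p :=
        Finset.sum_le_sum fun k _ => pc14_scalar_jensen hp w (fun j => v j k) hw hsum
    _ = ∑ j, w j * ∑ k, |v j k| ^ p := by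
        rw [Finset.sum_comm]
        exact Finset.sum_congr rfl fun j _ => (Finset.mul_sum _ _ _).symm

lemma pc14_CC (hp : 1 < p) {c : ℝ} (hc : 0 ≤ c) (w : Fin m → ℝ)
    (v : Fin m → Fin n → ℝ) (hw : ∀ j, 0 ≤ w j) (hsum : ∑ j, w j = 1)
    (hb : ∀ j, pnorm p (v j) ≤ c) : pnorm p (∑ j, w j • v j) ≤ c := by
  refine pc14_pnorm_le hp hc ?_
  calc pc14Sp p (∑ j, w j • v j) ≤ ∑ j, w j * pc14Sp p (v j) :=
        pc14Sp_combo_le hp w v hw hsum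
    _ ≤ ∑ j, w j * c ^ p :=
        Finset.sum_le_sum fun j _ =>
          mul_le_mul_of_nonneg_left (pc14Sp_le_of_pnorm_le hp (hb j)) (hw j)
    _ = c ^ p := by rw [← Finset.sum_mul, hsum, one_mul]

lemma pc14_CC_strict (hp : 1 < p) {c : ℝ} (hc : 0 ≤ c) (w : Fin m → ℝ)
    (v : Fin m → Fin n → ℝ) (hw : ∀ j, 0 ≤ w j) (hsum : ∑ j, w j = 1)
    (hb : ∀ j, pnorm p (v j) ≤ c) {j0 : Fin m} (h0 : 0 < w j0)
    (hlt : pnorm p (v j0) < c) : pnorm p (∑ j, w j • v j) < c := by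
  refine pc14_pnorm_lt hp hc ?_
  have hstep : ∑ j, w j * pc14Sp p (v j) < ∑ j, w j * c ^ p := by
    refine Finset.sum_lt_sum (fun j _ =>
      mul_le_mul_of_nonneg_left (pc14Sp_le_of_pnorm_le hp (hb j)) (hw j)) ⟨j0, Finset.mem_univ j0, ?_⟩
    refine mul_lt_mul_of_pos_left ?_ h0
    rw [pc14Sp_eq_pow hp]
    exact Real.rpow_lt_rpow (pc14_pnorm_nonneg hp _) hlt (by positivity)
  calc pc14Sp p (∑ j, w j • v j) ≤ ∑ j, w j * pc14Sp p (v j) :=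
        pc14Sp_combo_le hp w v hw hsum
    _ < ∑ j, w j * c ^ p := hstep
    _ = c ^ p := by rw [← Finset.sum_mul, hsum, one_mul]

lemma pc14_CC_eq (hp : 1 < p) {c : ℝ} (hc : 0 ≤ c) (w : Fin m → ℝ)
    (v : Fin m → Fin n → ℝ) (hw : ∀ j, 0 ≤ w j) (hsum : ∑ j, w j = 1)
    (hb : ∀ j, pnorm p (v j) ≤ c) {j0 j1 : Fin m} (h0 : 0 < w j0) (h1 : 0 < w j1)
    (hne : v j0 ≠ v j1) : pnorm p (∑ j, w j • v j) < c := by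
  refine pc14_pnorm_lt hp hc ?_
  obtain ⟨k0, hk0⟩ : ∃ k, v j0 k ≠ v j1 k := by
    by_contra h
    push_neg at h
    exact hne (funext h)
  have hstrict : ∑ k, |(∑ j, w j • v j) k| ^ p < ∑ k, ∑ j, w j * |v j k| ^ p := by
    refine Finset.sum_lt_sum (fun k _ => ?_) ⟨k0, Finset.mem_univ k0, ?_⟩
    · rw [pc14_combo_apply]
      exact pc14_scalar_jensen hp w (fun j => v j k) hw hsum
    · rw [pc14_combo_apply]
      exact pc14_scalar_jensen_strict hp w (fun j => v j k0) hw hsum h0 h1 hk0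
  have heq : ∑ k, ∑ j, w j * |v j k| ^ p = ∑ j, w j * pc14Sp p (v j) := by
    rw [Finset.sum_comm]
    exact Finset.sum_congr rfl fun j _ => (Finset.mul_sum _ _ _).symm
  have hle : ∑ j, w j * pc14Sp p (v j) ≤ c ^ p := by
    calc ∑ j, w j * pc14Sp p (v j) ≤ ∑ j, w j * c ^ p :=
          Finset.sum_le_sum fun j _ =>
            mul_le_mul_of_nonneg_left (pc14Sp_le_of_pnorm_le hp (hb j)) (hw j)
      _ = c ^ p := by rw [← Finset.sum_mul, hsum, one_mul]
  calc pc14Sp p (∑ j, w j • v j) = ∑ k, |(∑ j, w j • v j) k| ^ p := rfl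
    _ < ∑ k, ∑ j, w j * |v j k| ^ p := hstrict
    _ = ∑ j, w j * pc14Sp p (v j) := heq
    _ ≤ c ^ p := hle

end pc14vec

def pc14PP {m : ℕ} (S : ℕ → Matrix (Fin m) (Fin m) ℝ) : ℕ → ℕ → Matrix (Fin m) (Fin m) ℝ
  | _, 0 => 1
  | t, r + 1 => pc14PP S (t + 1) r * S (t + 1)

lemma pc14PP_succ_left {m : ℕ} (S : ℕ → Matrix (Fin m) (Fin m) ℝ) (t r : ℕ) :
    pc14PP S t (r + 1) = S (t + r + 1) * pc14PP S t r := by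
  induction r generalizing t with
  | zero => simp [pc14PP]
  | succ r ih =>
    show pc14PP S (t + 1) (r + 1) * S (t + 1) = S (t + (r + 1) + 1) * pc14PP S t (r + 1)
    rw [ih (t + 1)]
    show S (t + 1 + r + 1) * pc14PP S (t + 1) r * S (t + 1) = _
    rw [Matrix.mul_assoc]
    have h1 : t + 1 + r + 1 = t + (r + 1) + 1 := by omega
    rw [h1]
    rfl

lemma pc14_foldl_eq_PP {m : ℕ} (S : ℕ → Matrix (Fin m) (Fin m) ℝ) (t r : ℕ) :
    (List.range r).foldl (fun A k => S (t + k + 1) * A) 1 = pc14PP S t r := by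
  induction r with
  | zero => rfl
  | succ r ih =>
    rw [List.range_succ, List.foldl_append, ih]
    show S (t + r + 1) * pc14PP S t r = pc14PP S t (r + 1)
    rw [pc14PP_succ_left]

lemma pc14_Phi_eq_PP {m : ℕ} (S : ℕ → Matrix (Fin m) (Fin m) ℝ) (t q : ℕ) :
    Phi S t q = pc14PP S t (q - t) := pc14_foldl_eq_PP S t (q - t)

lemma pc14PP_nonneg {m : ℕ} (S : ℕ → Matrix (Fin m) (Fin m) ℝ) (t r : ℕ)
    (h : ∀ s, t + 1 ≤ s → s ≤ t + r → ∀ i j, 0 ≤ S s i j) :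
    ∀ i j, 0 ≤ pc14PP S t r i j := by
  induction r generalizing t with
  | zero =>
    intro i j
    show (0:ℝ) ≤ (1 : Matrix (Fin m) (Fin m) ℝ) i j
    rw [Matrix.one_apply]
    split <;> norm_num
  | succ r ih =>
    intro i j
    show (0:ℝ) ≤ (pc14PP S (t + 1) r * S (t + 1)) i j
    rw [Matrix.mul_apply]
    refine Finset.sum_nonneg fun k _ => mul_nonneg ?_ ?_
    · exact ih (t + 1) (fun s hs1 hs2 => h s (by omega) (by omega)) i k
    · exact h (t + 1) (by omega) (by omega) k j

lemma pc14_exists_pos_of_sum_pos {m : ℕ} {f : Fin m → ℝ} (h : 0 < ∑ k, f k) :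
    ∃ k, 0 < f k := by
  by_contra hc
  push_neg at hc
  exact absurd (Finset.sum_nonpos fun k _ => hc k) (not_le.2 h)

lemma pc14_sup_spec {m : ℕ} (hm : 0 < m) (f : Fin m → ℝ) :
    (∀ i, f i ≤ ⨆ j, f j) ∧ ∃ i, (⨆ j, f j) = f i := by
  have : Nonempty (Fin m) := ⟨⟨0, hm⟩⟩
  obtain ⟨i0, hi0⟩ := Finite.exists_max f
  refine ⟨fun i => le_ciSup (Set.Finite.bddAbove (Set.finite_range f)) i, i0, ?_⟩
  exact le_antisymm (ciSup_le hi0) (le_ciSup (Set.Finite.bddAbove (Set.finite_range f)) i0)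

lemma pc14_dichotomy {n m : ℕ} (hm : 1 < m) {p : ℝ} (hp : 1 < p)
    (M : Fin m → (Fin n → ℝ) → (Fin n → ℝ))
    (hpc : ∀ i, IsParacontraction (pnorm p) (M i))
    (q : ℕ) (hq : 1 ≤ q) (S : ℕ → Matrix (Fin m) (Fin m) ℝ)
    (hS : ∀ t, 1 ≤ t → t ≤ q → IsStochastic (S t))
    (hpos : ∀ i j, 0 < Phi S 0 q i j)
    (y : Fin n → ℝ) (hy : ∀ i, M i y = y)
    (x : Fin m → Fin n → ℝ) :
    (∃ z, (∀ i, x i = z) ∧ ∀ i, M i z = z) ∨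
      (⨆ i, pnorm p (mapChain (fun t => kron (S t) ∘ stackMap M) q x i - y)) <
        ⨆ i, pnorm p (x i - y) := by
  classical
  have hm0 : 0 < m := by omega
  set F : ℕ → (Fin m → Fin n → ℝ) → (Fin m → Fin n → ℝ) :=
    fun t => kron (S t) ∘ stackMap M with hF
  set X : ℕ → Fin m → Fin n → ℝ := fun t => mapChain F t x with hX
  have hXapply : ∀ t i, X (t + 1) i = ∑ j, S (t + 1) i j • M j (X t j) := fun t i => rfl
  have hqne : ∀ i v, pnorm p (M i v - y) ≤ pnorm p (v - y) := by
    intro i v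
    by_cases h : M i v = v
    · rw [h]
    · exact le_of_lt ((hpc i).2 v y h (hy i))
  set c : ℝ := ⨆ i, pnorm p (x i - y) with hcdef
  have hsup0 := pc14_sup_spec hm0 (fun i => pnorm p (x i - y))
  have hc0 : 0 ≤ c := le_trans (pc14_pnorm_nonneg hp _) (hsup0.1 ⟨0, hm0⟩)
  have hbound : ∀ t, t ≤ q → ∀ i, pnorm p (X t i - y) ≤ c := by
    intro t
    induction t with
    | zero => intro _ i; exact hsup0.1 i
    | succ t ih =>
      intro ht i
      have hst := hS (t + 1) (by omega) (by omega)
      have hsub : X (t + 1) i - y = ∑ j, S (t + 1) i j • (M j (X t j) - y) := by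
        rw [hXapply t i]
        exact pc14_sub_combo _ (hst.2 i) _ y
      rw [hsub]
      exact pc14_CC hp hc0 _ _ (fun j => hst.1 i j) (hst.2 i)
        (fun j => le_trans (hqne j (X t j)) (ih (by omega) j))
  by_contra hcon
  rw [not_or, not_lt] at hcon
  obtain ⟨h1, h2⟩ := hcon
  obtain ⟨istar, hstar⟩ := (pc14_sup_spec hm0 (fun i => pnorm p (X q i - y))).2
  have hstar_eq : pnorm p (X q istar - y) = c :=
    le_antisymm (hbound q le_rfl istar) (le_trans h2 (le_of_eq hstar))
  set z : Fin n → ℝ := X q istar with hzdef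
  have hSnn : ∀ s, 1 ≤ s → s ≤ q → ∀ i j, 0 ≤ S s i j := fun s a b i j => (hS s a b).1 i j
  have key : ∀ s, s ≤ q → ∀ j, 0 < pc14PP S (q - s) s istar j →
      X (q - s) j = z ∧ pnorm p (X (q - s) j - y) = c ∧
        (s = 0 ∨ M j (X (q - s) j) = X (q - s) j) := by
    intro s
    induction s with
    | zero =>
      intro _ j hj
      have hij : istar = j := by
        by_contra hne
        rw [show pc14PP S (q - 0) 0 = (1 : Matrix (Fin m) (Fin m) ℝ) from rfl,
          Matrix.one_apply_ne hne] at hj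
        exact lt_irrefl 0 hj
      subst hij
      exact ⟨rfl, hstar_eq, Or.inl rfl⟩
    | succ s ih =>
      intro hs j hj
      set t := q - (s + 1) with htdef
      have ht1 : q - s = t + 1 := by omega
      rw [show pc14PP S t (s + 1) = pc14PP S (t + 1) s * S (t + 1) from rfl,
        Matrix.mul_apply] at hj
      obtain ⟨k, hk⟩ := pc14_exists_pos_of_sum_pos hj
      have hPPnn : ∀ i j', 0 ≤ pc14PP S (t + 1) s i j' :=
        pc14PP_nonneg S (t + 1) s (fun s' a b i j' => hSnn s' (by omega) (by omega) i j')
      have hSt := hS (t + 1) (by omega) (by omega)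
      have hk1 : 0 < pc14PP S (t + 1) s istar k := by
        rcases mul_pos_iff.1 hk with ⟨ha, _⟩ | ⟨ha, _⟩
        · exact ha
        · exact absurd ha (not_lt.2 (hPPnn istar k))
      have hk2 : 0 < S (t + 1) k j := by
        rcases mul_pos_iff.1 hk with ⟨_, hb⟩ | ⟨ha, _⟩
        · exact hb
        · exact absurd ha (not_lt.2 (hPPnn istar k))
      have ihk := ih (by omega) k (by rw [ht1]; exact hk1)
      rw [ht1] at ihk
      set w : Fin m → ℝ := fun j' => S (t + 1) k j' with hwdef
      set v : Fin m → Fin n → ℝ := fun j' => M j' (X t j') - y with hvdef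
      have hvb : ∀ j', pnorm p (v j') ≤ c :=
        fun j' => le_trans (hqne j' _) (hbound t (by omega) j')
      have hXk : X (t + 1) k - y = ∑ j', w j' • v j' := by
        rw [hXapply t k]
        exact pc14_sub_combo _ (hSt.2 k) _ y
      have hnormk : pnorm p (X (t + 1) k - y) = c := ihk.2.1
      have hallequal : ∀ j1 j2, 0 < w j1 → 0 < w j2 → v j1 = v j2 := by
        intro j1 j2 hw1 hw2
        by_contra hne
        have hlt := pc14_CC_eq hp hc0 w v (fun j' => hSt.1 k j') (hSt.2 k) hvb hw1 hw2 hne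
        rw [← hXk] at hlt
        exact absurd hnormk (ne_of_lt hlt)
      have hcombo : X (t + 1) k - y = v j := by
        rw [hXk]
        have hterm : ∀ j', w j' • v j' = w j' • v j := by
          intro j'
          rcases eq_or_lt_of_le (hSt.1 k j') with h | h
          · rw [show w j' = (0:ℝ) from h.symm]; simp
          · rw [hallequal j' j h hk2]
        rw [Finset.sum_congr rfl (fun j' _ => hterm j'), ← Finset.sum_smul, hSt.2 k, one_smul]
      have hvj : v j = z - y := by rw [← hcombo, ihk.1]
      have hMj : M j (X t j) = z := by
        have : M j (X t j) - y = z - y := hvj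
        exact sub_left_injective this
      have hnMj : pnorm p (M j (X t j) - y) = c := by
        rw [hMj, hzdef, hstar_eq]
      have hble : pnorm p (X t j - y) ≤ c := hbound t (by omega) j
      have hfix : M j (X t j) = X t j := by
        by_contra hne
        have hlt := (hpc j).2 (X t j) y hne (hy j)
        rw [hnMj] at hlt
        exact absurd hble (not_le.2 hlt)
      refine ⟨by rw [← hfix, hMj], ?_, Or.inr hfix⟩
      exact le_antisymm hble (le_trans (le_of_eq hnMj.symm) (hqne j (X t j)))
  have hall : ∀ j, x j = z ∧ M j (x j) = x j := by
    intro j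
    have hpp : 0 < pc14PP S (q - q) q istar j := by
      have h := hpos istar j
      rw [pc14_Phi_eq_PP] at h
      simpa [Nat.sub_zero, Nat.sub_self] using h
    have hk := key q le_rfl j hpp
    rw [Nat.sub_self] at hk
    refine ⟨hk.1, ?_⟩
    rcases hk.2.2 with h | h
    · omega
    · exact h
  exact h1 ⟨z, fun i => (hall i).1, fun i => by
    have := (hall i).2
    rwa [(hall i).1] at this⟩

lemma pc14_consensus_fixed {n m : ℕ} (M : Fin m → (Fin n → ℝ) → (Fin n → ℝ))
    (q : ℕ) (S : ℕ → Matrix (Fin m) (Fin m) ℝ)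
    (hS : ∀ t, 1 ≤ t → t ≤ q → IsStochastic (S t))
    (z : Fin n → ℝ) (hz : ∀ i, M i z = z)
    (x : Fin m → Fin n → ℝ) (hx : ∀ i, x i = z) :
    ∀ k, k ≤ q → mapChain (fun t => kron (S t) ∘ stackMap M) k x = x := by
  intro k
  induction k with
  | zero => intro _; rfl
  | succ k ih =>
    intro hk
    show (kron (S (k + 1)) ∘ stackMap M) (mapChain (fun t => kron (S t) ∘ stackMap M) k x) = x
    rw [ih (by omega)]
    have hsM : stackMap M x = x := funext fun i => by
      show M i (x i) = x i
      rw [hx i, hz i]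
    show kron (S (k + 1)) (stackMap M x) = x
    rw [hsM]
    funext i
    show ∑ j, S (k + 1) i j • x j = x i
    calc ∑ j, S (k + 1) i j • x j = ∑ j, S (k + 1) i j • z :=
          Finset.sum_congr rfl fun j _ => by rw [hx j]
      _ = (∑ j, S (k + 1) i j) • z := (Finset.sum_smul).symm
      _ = z := by rw [(hS (k + 1) (by omega) (by omega)).2 i, one_smul]
      _ = x i := (hx i).symm

lemma pc14_chain_cont {n m : ℕ} (M : Fin m → (Fin n → ℝ) → (Fin n → ℝ))
    (hc : ∀ i, Continuous (M i)) (S : ℕ → Matrix (Fin m) (Fin m) ℝ) (q : ℕ) :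
    Continuous (mapChain (fun t => kron (S t) ∘ stackMap M) q) := by
  induction q with
  | zero => exact continuous_id
  | succ q ih =>
    show Continuous ((kron (S (q + 1)) ∘ stackMap M) ∘
      mapChain (fun t => kron (S t) ∘ stackMap M) q)
    have h1 : Continuous (stackMap M) :=
      continuous_pi fun i => (hc i).comp (continuous_apply i)
    have h2 : Continuous (kron (S (q + 1)) : (Fin m → Fin n → ℝ) → Fin m → Fin n → ℝ) :=
      continuous_pi fun i => continuous_finset_sum _ fun j _ => by fun_prop
    exact (h2.comp h1).comp ih

theorem stmt14 {n m : ℕ} (hm : 1 < m) (p : ℝ) (hp : 1 < p)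
    (M : Fin m → (Fin n → ℝ) → (Fin n → ℝ))
    (hpc : ∀ i, IsParacontraction (pnorm p) (M i))
    (hcommon : ∃ y : Fin n → ℝ, ∀ i, M i y = y)
    (q : ℕ) (hq : 1 ≤ q) (S : ℕ → Matrix (Fin m) (Fin m) ℝ)
    (hS : ∀ t, 1 ≤ t → t ≤ q → IsStochastic (S t))
    (hpos : ∀ i j, 0 < Phi S 0 q i j) :
    IsParacontraction (mixedPInf p)
      (mapChain (fun t => kron (S t) ∘ stackMap M) q) ∧
    {x : Fin m → Fin n → ℝ | mapChain (fun t => kron (S t) ∘ stackMap M) q x = x}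
      = {x : Fin m → Fin n → ℝ | ∃ y, (∀ i, x i = y) ∧ ∀ i, M i y = y} := by
  obtain ⟨ystar, hystar⟩ := hcommon
  have hfix : ∀ x, mapChain (fun t => kron (S t) ∘ stackMap M) q x = x ↔
      ∃ y, (∀ i, x i = y) ∧ ∀ i, M i y = y := by
    intro x
    constructor
    · intro hx
      rcases pc14_dichotomy hm hp M hpc q hq S hS hpos ystar hystar x with h | h
      · exact h
      · exfalso
        rw [hx] at h
        exact lt_irrefl _ h
    · rintro ⟨z, hxz, hz⟩
      exact pc14_consensus_fixed M q S hS z hz x hxz q le_rfl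
  constructor
  · constructor
    · exact pc14_chain_cont M (fun i => (hpc i).1) S q
    · intro x yv hx hyv
      obtain ⟨z, hyz, hz⟩ := (hfix yv).1 hyv
      rcases pc14_dichotomy hm hp M hpc q hq S hS hpos z hz x with h | h
      · exact absurd ((hfix x).2 h) hx
      · have e1 : mapChain (fun t => kron (S t) ∘ stackMap M) q x - yv =
            fun i => mapChain (fun t => kron (S t) ∘ stackMap M) q x i - z :=
          funext fun i => by
            show mapChain (fun t => kron (S t) ∘ stackMap M) q x i - yv i = _
            rw [hyz i]
        have e2 : x - yv = fun i => x i - z := funext fun i => by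
          show x i - yv i = x i - z
          rw [hyz i]
        show mixedPInf p (mapChain (fun t => kron (S t) ∘ stackMap M) q x - yv) <
          mixedPInf p (x - yv)
        rw [show mixedPInf p (mapChain (fun t => kron (S t) ∘ stackMap M) q x - yv) =
            ⨆ i, pnorm p (mapChain (fun t => kron (S t) ∘ stackMap M) q x i - z) from by
              rw [mixedPInf, e1],
          show mixedPInf p (x - yv) = ⨆ i, pnorm p (x i - z) from by rw [mixedPInf, e2]]
        exact h
  · ext x
    simp only [Set.mem_setOf_eq]
    exact hfix x
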